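/- A monoid M is strongly Markov as a semigroup if and only if it is strongly Markov as a monoid. -/

import Mathlib

open Function

/-- A language is regular if it is accepted by a deterministic finite automaton
with a finite state set. -/
def RegularLang {A : Type} (L : Language A) : Prop :=
  ∃ (Q : Type) (_ : Fintype Q) (M : DFA A Q), M.accepts = L

/-- The product of a nonempty word under the letter-assignment `φ`; the empty
word is sent to `none`. This is the induced map `φ⁺` on nonempty words. -/
def prodPlus {A S : Type} [Semigroup S] (φ : A → S) : List A → Option S
  | [] => none
  | a :: w => some (w.foldl (fun s b => s * φ b) (φ a))

/-- The induced monoid homomorphism `φ*` from the free monoid of words. -/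
def monProd {A M : Type} [Monoid M] (φ : A → M) (w : List A) : M :=
  (w.map φ).prod

/-- A semigroup Markov language for `S` over `A` (with respect to `φ`): a regular,
`+`-prefix-closed language of nonempty words mapping bijectively onto `S` under `φ⁺`. -/
structure IsSgMarkovLang {A S : Type} [Semigroup S] (φ : A → S) (L : Language A) : Prop where
  regular : RegularLang L
  not_empty_mem : [] ∉ L
  plus_prefix_closed : ∀ u v : List A, u ≠ [] → v ≠ [] → u ++ v ∈ L → u ∈ L
  unique_rep : ∀ s : S, ∃! w : List A, w ∈ L ∧ prodPlus φ w = some s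

/-- A robust semigroup Markov language: additionally every word of `L` has minimal
length among (nonempty) words representing the same element. -/
structure IsRobustSgMarkovLang {A S : Type} [Semigroup S] (φ : A → S) (L : Language A)
    extends IsSgMarkovLang φ L : Prop where
  min_length : ∀ w ∈ L, ∀ v : List A, prodPlus φ v = prodPlus φ w → w.length ≤ v.length

/-- A monoid Markov language for `M` over `A` (with respect to `φ`): a regular,
prefix-closed language mapping bijectively onto `M` under `φ*`. -/
structure IsMonMarkovLang {A M : Type} [Monoid M] (φ : A → M) (L : Language A) : Prop where
  regular : RegularLang L
  prefix_closed : ∀ u v : List A, u ++ v ∈ L → u ∈ L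
  unique_rep : ∀ m : M, ∃! w : List A, w ∈ L ∧ monProd φ w = m

/-- A robust monoid Markov language: additionally every word of `L` has minimal
length among words representing the same element. -/
structure IsRobustMonMarkovLang {A M : Type} [Monoid M] (φ : A → M) (L : Language A)
    extends IsMonMarkovLang φ L : Prop where
  min_length : ∀ w ∈ L, ∀ v : List A, monProd φ v = monProd φ w → w.length ≤ v.length

/-- `S` is Markov as a semigroup. -/
def SgMarkov (S : Type) [Semigroup S] : Prop :=
  ∃ (A : Type) (_ : Fintype A) (φ : A → S),
    (∀ s : S, ∃ w : List A, prodPlus φ w = some s) ∧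
    ∃ L : Language A, IsSgMarkovLang φ L

/-- `S` is robustly Markov (as a semigroup) with respect to some alphabet. -/
def SgRobustlyMarkov (S : Type) [Semigroup S] : Prop :=
  ∃ (A : Type) (_ : Fintype A) (φ : A → S),
    (∀ s : S, ∃ w : List A, prodPlus φ w = some s) ∧
    ∃ L : Language A, IsRobustSgMarkovLang φ L

/-- `S` is strongly Markov (as a semigroup). -/
def SgStronglyMarkov (S : Type) [Semigroup S] : Prop :=
  ∀ (A : Type) [Fintype A] (φ : A → S),
    (∀ s : S, ∃ w : List A, prodPlus φ w = some s) →
    ∃ L : Language A, IsRobustSgMarkovLang φ L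

/-- `M` is Markov as a monoid. -/
def MonMarkov (M : Type) [Monoid M] : Prop :=
  ∃ (A : Type) (_ : Fintype A) (φ : A → M),
    Surjective (monProd φ) ∧ ∃ L : Language A, IsMonMarkovLang φ L

/-- `M` is robustly Markov (as a monoid) with respect to some alphabet. -/
def MonRobustlyMarkov (M : Type) [Monoid M] : Prop :=
  ∃ (A : Type) (_ : Fintype A) (φ : A → M),
    Surjective (monProd φ) ∧ ∃ L : Language A, IsRobustMonMarkovLang φ L

/-- `M` is strongly Markov (as a monoid). -/
def MonStronglyMarkov (M : Type) [Monoid M] : Prop :=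
  ∀ (A : Type) [Fintype A] (φ : A → M),
    Surjective (monProd φ) →
    ∃ L : Language A, IsRobustMonMarkovLang φ L

section RegularLemmas
variable {A B : Type}

lemma RegularLang.compl {L : Set (List A)} (h : RegularLang L) : RegularLang (Lᶜ) := by
  obtain ⟨Q, fQ, M, hM⟩ := h
  exact ⟨Q, fQ, ⟨M.step, M.start, M.acceptᶜ⟩, by
    ext x
    simp only [DFA.mem_accepts, ← hM, Set.mem_compl_iff]
    rfl⟩

lemma RegularLang.inter {L₁ L₂ : Set (List A)} (h₁ : RegularLang L₁) (h₂ : RegularLang L₂) :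
    RegularLang ((L₁ ∩ L₂ : Set (List A))) := by
  obtain ⟨Q₁, f₁, M₁, hM₁⟩ := h₁
  obtain ⟨Q₂, f₂, M₂, hM₂⟩ := h₂
  refine ⟨Q₁ × Q₂, inferInstance,
    ⟨fun q a => (M₁.step q.1 a, M₂.step q.2 a), (M₁.start, M₂.start),
      {q | q.1 ∈ M₁.accept ∧ q.2 ∈ M₂.accept}⟩, ?_⟩
  have key : ∀ (x : List A) (p : Q₁) (q : Q₂),
      DFA.evalFrom ⟨fun q a => (M₁.step q.1 a, M₂.step q.2 a), (M₁.start, M₂.start),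
        {q | q.1 ∈ M₁.accept ∧ q.2 ∈ M₂.accept}⟩ (p, q) x
        = (M₁.evalFrom p x, M₂.evalFrom q x) := by
    intro x
    induction x with
    | nil => intro p q; rfl
    | cons a x ih => intro p q; exact ih _ _
  ext x
  simp only [DFA.mem_accepts, DFA.eval, key, ← hM₁, ← hM₂]
  rfl

lemma RegularLang.union {L₁ L₂ : Set (List A)} (h₁ : RegularLang L₁) (h₂ : RegularLang L₂) :
    RegularLang ((L₁ ∪ L₂ : Set (List A))) := by
  have := (h₁.compl.inter h₂.compl).compl
  have e : (L₁ ∪ L₂ : Set (List A)) = ((L₁ᶜ ∩ L₂ᶜ : Set (List A))ᶜ : Set (List A)) := by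
    simp [Set.compl_inter]
  rw [e]
  exact this

lemma RegularLang.comap (f : A → B) {L : Set (List B)} (h : RegularLang L) :
    RegularLang ((List.map f) ⁻¹' L : Set (List A)) := by
  obtain ⟨Q, fQ, M, hM⟩ := h
  refine ⟨Q, fQ, ⟨fun q a => M.step q (f a), M.start, M.accept⟩, ?_⟩
  ext x
  simp only [DFA.mem_accepts, Set.mem_preimage, ← hM]
  have : ∀ (x : List A) (q : Q),
      DFA.evalFrom ⟨fun q a => M.step q (f a), M.start, M.accept⟩ q x
        = M.evalFrom q (x.map f) := by
    intro x
    induction x with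
    | nil => intro q; rfl
    | cons a x ih => intro q; exact ih _
  simp only [DFA.eval, this]
  rfl

open Classical in
noncomputable def wordDFA (w : List A) : DFA A (Option (Fin (w.length + 1))) where
  step q a := q.bind fun i =>
    if h : (i : ℕ) < w.length then
      (if w[(i : ℕ)]'h = a then some ⟨(i : ℕ) + 1, by omega⟩ else none)
    else none
  start := some ⟨0, Nat.succ_pos _⟩
  accept := {some (Fin.last w.length)}

lemma wordDFA_none (w : List A) (x : List A) : (wordDFA w).evalFrom none x = none := by
  induction x with
  | nil => rfl
  | cons a x ih => exact ih

lemma wordDFA_some (w : List A) :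
    ∀ (x : List A) (i : Fin (w.length + 1)),
      ((wordDFA w).evalFrom (some i) x ∈ (wordDFA w).accept ↔ x = w.drop i) := by
  intro x
  induction x with
  | nil =>
    intro i
    simp only [DFA.evalFrom_nil, wordDFA, Set.mem_singleton_iff, Option.some_inj]
    constructor
    · rintro rfl; simp
    · intro h
      have : w.length ≤ (i : ℕ) := by
        have := congrArg List.length h
        simp [List.length_drop] at this
        omega
      have : (i : ℕ) = w.length := by omega
      exact Fin.ext this
  | cons a x ih =>
    intro i
    have hstep : (wordDFA w).evalFrom (some i) (a :: x) =
        (wordDFA w).evalFrom ((wordDFA w).step (some i) a) x := rfl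
    rw [hstep]
    by_cases hlt : (i : ℕ) < w.length
    · by_cases ha : w[(i : ℕ)]'hlt = a
      · have : (wordDFA w).step (some i) a = some ⟨(i : ℕ) + 1, by omega⟩ := by
          simp [wordDFA, hlt, ha]
        rw [this, ih]
        rw [List.drop_eq_getElem_cons hlt]
        constructor
        · rintro rfl; rw [ha]
        · intro h
          exact (List.cons.injEq _ _ _ _ ▸ h).2
      · have : (wordDFA w).step (some i) a = none := by
          simp [wordDFA, hlt, ha]
        rw [this, wordDFA_none]
        simp only [wordDFA, Set.mem_singleton_iff]
        constructor
        · intro h; exact absurd h (by simp)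
        · intro h
          rw [List.drop_eq_getElem_cons hlt] at h
          exact absurd ((List.cons.injEq _ _ _ _ ▸ h).1.symm) ha
    · have : (wordDFA w).step (some i) a = none := by
        simp [wordDFA, hlt]
      rw [this, wordDFA_none]
      have hdrop : w.drop i = [] := List.drop_eq_nil_of_le (by omega)
      rw [hdrop]
      simp [wordDFA]

lemma RegularLang.singleton (w : List A) : RegularLang ({w} : Set (List A)) := by
  refine ⟨Option (Fin (w.length + 1)), inferInstance, wordDFA w, ?_⟩
  ext x
  rw [DFA.mem_accepts]
  show (wordDFA w).evalFrom (some ⟨0, _⟩) x ∈ _ ↔ _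
  rw [wordDFA_some w x ⟨0, Nat.succ_pos _⟩]
  simp only [List.drop_zero]
  exact Set.mem_singleton_iff.symm

end RegularLemmas


section Helpers
variable {A M : Type} [Monoid M]

lemma foldl_mul_eq (φ : A → M) : ∀ (w : List A) (x : M),
    w.foldl (fun s b => s * φ b) x = x * (w.map φ).prod := by
  intro w
  induction w with
  | nil => intro x; simp
  | cons a w ih => intro x; simp [ih, mul_assoc]

lemma prodPlus_eq_some (φ : A → M) {w : List A} (h : w ≠ []) :
    prodPlus φ w = some (monProd φ w) := by
  cases w with
  | nil => exact absurd rfl h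
  | cons a w => simp [prodPlus, monProd, foldl_mul_eq]

lemma monProd_nil (φ : A → M) : monProd φ [] = 1 := rfl

lemma monProd_cons (φ : A → M) (a : A) (w : List A) :
    monProd φ (a :: w) = φ a * monProd φ w := by simp [monProd]

lemma monProd_append (φ : A → M) (u v : List A) :
    monProd φ (u ++ v) = monProd φ u * monProd φ v := by simp [monProd]

lemma of_prodPlus_eq_some (φ : A → M) {w : List A} {s : M}
    (h : prodPlus φ w = some s) : w ≠ [] ∧ monProd φ w = s := by
  cases w with
  | nil => simp [prodPlus] at h
  | cons a w =>
    refine ⟨by simp, ?_⟩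
    rw [prodPlus_eq_some φ (by simp)] at h
    exact Option.some_inj.mp h

lemma all_inl : ∀ w : List (A ⊕ Unit), Sum.inr () ∉ w → ∃ v : List A, w = v.map Sum.inl := by
  intro w
  induction w with
  | nil => exact fun _ => ⟨[], rfl⟩
  | cons a t ih =>
    intro h
    obtain ⟨v, hv⟩ := ih (fun hm => h (List.mem_cons_of_mem _ hm))
    cases a with
    | inl b => exact ⟨b :: v, by simp [hv]⟩
    | inr u => cases u; exact absurd List.mem_cons_self (fun hh => h hh)

end Helpers


section Directions
variable {M : Type} [Monoid M]

lemma sg_to_mon (h : SgStronglyMarkov M) : MonStronglyMarkov M := by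
  intro A _instA φ hsurj
  classical
  set φ' : A ⊕ Unit → M := Sum.elim φ (fun _ => 1) with hφ'
  have hmap : ∀ v : List A, monProd φ' (v.map Sum.inl) = monProd φ v := by
    intro v; simp [monProd, List.map_map, hφ']
  have hsurj' : ∀ s : M, ∃ w, prodPlus φ' w = some s := by
    intro s
    obtain ⟨v, hv⟩ := hsurj s
    cases v with
    | nil =>
      refine ⟨[Sum.inr ()], ?_⟩
      rw [prodPlus_eq_some φ' (by simp), ← hv]
      simp [monProd, hφ']
    | cons a t =>
      refine ⟨(a :: t).map Sum.inl, ?_⟩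
      rw [prodPlus_eq_some φ' (by simp), hmap, hv]
  obtain ⟨L', hL'⟩ := h (A ⊕ Unit) φ' hsurj'
  have hne' : ∀ w ∈ L', w ≠ [] := fun w hw heq => hL'.not_empty_mem (heq ▸ hw)
  obtain ⟨r, ⟨hrL, hrp⟩, hru⟩ := hL'.unique_rep 1
  have hrne : r ≠ [] := hne' r hrL
  have hrprod : monProd φ' r = 1 := by
    rw [prodPlus_eq_some φ' hrne] at hrp; exact Option.some_inj.mp hrp
  have hc : ∀ u v : List (A ⊕ Unit), u ≠ [] → v ≠ [] → monProd φ' u = 1 →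
      u ++ v ∈ L' → False := by
    intro u v hu hv hup huv
    have h1 : prodPlus φ' v = prodPlus φ' (u ++ v) := by
      rw [prodPlus_eq_some φ' hv,
        prodPlus_eq_some φ' (show u ++ v ≠ [] from by simp [hu]),
        monProd_append, hup, one_mul]
    have h2 := hL'.min_length (u ++ v) huv v h1
    have h3 : 1 ≤ u.length := List.length_pos_iff.mpr hu
    simp only [List.length_append] at h2
    omega
  have hA : ∀ w, w ∈ L' → monProd φ' w ≠ 1 → ∃ v : List A, w = v.map Sum.inl := by
    intro w hw hprod
    apply all_inl
    intro hmem
    obtain ⟨x, y, hxy⟩ := List.append_of_mem hmem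
    have hxyprod : monProd φ' w = monProd φ' (x ++ y) := by
      rw [hxy, monProd_append, monProd_append, monProd_cons]
      simp [hφ']
    by_cases hxe : x ++ y = []
    · apply hprod
      rw [hxyprod, hxe, monProd_nil]
    · have h1 : prodPlus φ' (x ++ y) = prodPlus φ' w := by
        rw [prodPlus_eq_some φ' hxe, prodPlus_eq_some φ' (hne' w hw), hxyprod]
      have h2 := hL'.min_length w hw (x ++ y) h1
      rw [hxy] at h2
      simp only [List.length_append, List.length_cons] at h2
      omega
  set LL : Language A :=
    (({([] : List A)} ∪ (List.map Sum.inl) ⁻¹' ((L' : Set (List (A ⊕ Unit))) ∩ {r}ᶜ)) :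
      Set (List A)) with hLL
  have hmem : ∀ w : List A,
      w ∈ LL ↔ (w = [] ∨ (w.map Sum.inl ∈ L' ∧ w.map Sum.inl ≠ r)) := by
    intro w
    exact Iff.rfl
  refine ⟨LL, ⟨⟨?_, ?_, ?_⟩, ?_⟩⟩
  · rw [hLL]
    exact (RegularLang.singleton ([] : List A)).union
      (RegularLang.comap Sum.inl (hL'.regular.inter (RegularLang.singleton r).compl))
  · -- prefix closed
    intro u v huv
    rcases (hmem (u ++ v)).mp huv with hnil | ⟨hin, hner⟩
    · exact (hmem u).mpr (Or.inl (List.append_eq_nil_iff.mp hnil).1)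
    · by_cases hu : u = []
      · exact (hmem u).mpr (Or.inl hu)
      · by_cases hv : v = []
        · subst hv
          exact (hmem u).mpr (Or.inr ⟨by simpa using hin, by simpa using hner⟩)
        · rw [List.map_append] at hin
          have huL : u.map Sum.inl ∈ L' :=
            hL'.plus_prefix_closed _ _ (by simpa using hu) (by simpa using hv) hin
          refine (hmem u).mpr (Or.inr ⟨huL, ?_⟩)
          intro heq
          exact hc (u.map Sum.inl) (v.map Sum.inl) (by simpa using hu)
            (by simpa using hv) (by rw [heq]; exact hrprod) hin
  · -- unique rep
    intro m
    by_cases hm : m = 1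
    · subst hm
      refine ⟨[], ⟨(hmem []).mpr (Or.inl rfl), monProd_nil φ⟩, ?_⟩
      rintro x ⟨hx, hxp⟩
      rcases (hmem x).mp hx with rfl | ⟨hin, hner⟩
      · rfl
      · exfalso
        have hxne : x ≠ [] := by
          rintro rfl; exact hL'.not_empty_mem (by simpa using hin)
        exact hner (hru (x.map Sum.inl)
          ⟨hin, by rw [prodPlus_eq_some φ' (by simpa using hxne), hmap, hxp]⟩)
    · obtain ⟨w', ⟨hw'L, hw'p⟩, hw'u⟩ := hL'.unique_rep m
      have hw'ne := hne' w' hw'L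
      have hw'prod : monProd φ' w' = m := by
        rw [prodPlus_eq_some φ' hw'ne] at hw'p; exact Option.some_inj.mp hw'p
      obtain ⟨v, rfl⟩ := hA w' hw'L (by rw [hw'prod]; exact hm)
      have hvp : monProd φ v = m := by rw [← hmap]; exact hw'prod
      have hner : v.map Sum.inl ≠ r := by
        intro heq
        apply hm
        rw [← hw'prod, heq]
        exact hrprod
      refine ⟨v, ⟨(hmem v).mpr (Or.inr ⟨hw'L, hner⟩), hvp⟩, ?_⟩
      rintro x ⟨hx, hxp⟩
      rcases (hmem x).mp hx with rfl | ⟨hin, _⟩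
      · exact absurd hxp.symm (by rw [monProd_nil]; exact hm)
      · have hxne : x ≠ [] := by
          rintro rfl; exact hL'.not_empty_mem (by simpa using hin)
        have := hw'u (x.map Sum.inl)
          ⟨hin, by rw [prodPlus_eq_some φ' (by simpa using hxne), hmap, hxp]⟩
        exact List.map_injective_iff.mpr Sum.inl_injective this
  · -- min length
    intro w hw v hvp
    rcases (hmem w).mp hw with rfl | ⟨hin, hner⟩
    · simp
    · have hwne : w ≠ [] := by
        rintro rfl; exact hL'.not_empty_mem (by simpa using hin)
      have hwprod1 : monProd φ w ≠ 1 := by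
        intro h1
        exact hner (hru (w.map Sum.inl)
          ⟨hin, by rw [prodPlus_eq_some φ' (by simpa using hwne), hmap, h1]⟩)
      have hvne : v ≠ [] := by
        rintro rfl
        exact hwprod1 (by rw [← hvp, monProd_nil])
      have h1 : prodPlus φ' (v.map Sum.inl) = prodPlus φ' (w.map Sum.inl) := by
        rw [prodPlus_eq_some φ' (by simpa using hvne),
          prodPlus_eq_some φ' (by simpa using hwne), hmap, hmap, hvp]
      have := hL'.min_length (w.map Sum.inl) hin (v.map Sum.inl) h1
      simpa using this

lemma mon_to_sg (h : MonStronglyMarkov M) : SgStronglyMarkov M := by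
  intro A _instA φ hsurj
  classical
  have hsurj' : Surjective (monProd φ) := by
    intro s
    obtain ⟨w, hw⟩ := hsurj s
    exact ⟨w, (of_prodPlus_eq_some φ hw).2⟩
  obtain ⟨L, hL⟩ := h A φ hsurj'
  obtain ⟨w₀, ⟨hw₀L, hw₀p⟩, hw₀u⟩ := hL.unique_rep 1
  have hw₀nil : w₀ = [] := by
    have := hL.min_length w₀ hw₀L [] (by rw [monProd_nil, hw₀p])
    exact List.length_eq_zero_iff.mp (Nat.le_zero.mp this)
  subst hw₀nil
  obtain ⟨w₁, hw₁⟩ := hsurj 1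
  obtain ⟨hw₁ne, hw₁p⟩ := of_prodPlus_eq_some φ hw₁
  have hex : ∃ n, ∃ w : List A, w ≠ [] ∧ monProd φ w = 1 ∧ w.length = n :=
    ⟨w₁.length, w₁, hw₁ne, hw₁p, rfl⟩
  obtain ⟨r₀, hr₀ne, hr₀p, hr₀len⟩ := Nat.find_spec hex
  have hmin : ∀ v : List A, v ≠ [] → monProd φ v = 1 → Nat.find hex ≤ v.length :=
    fun v hv hp => Nat.find_min' hex ⟨v, hv, hp, rfl⟩
  obtain ⟨u', ⟨hu'L, hu'p⟩, _⟩ := hL.unique_rep (monProd φ (r₀.dropLast))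
  have hu'len : u'.length ≤ r₀.dropLast.length := hL.min_length u' hu'L _ (by rw [hu'p])
  set b := r₀.getLast hr₀ne with hb
  have hub : r₀.dropLast ++ [b] = r₀ := List.dropLast_append_getLast hr₀ne
  set r : List A := u' ++ [b] with hr
  have hrp : monProd φ r = 1 := by
    rw [hr, monProd_append, hu'p, ← monProd_append, hub, hr₀p]
  have hrne : r ≠ [] := by simp [hr]
  have hrlen : r.length ≤ Nat.find hex := by
    have h1 : r.length = u'.length + 1 := by simp [hr]
    have h2 : r₀.length = r₀.dropLast.length + 1 := by
      rw [← hub]; simp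
    omega
  set Lp : Language A :=
    ((((L : Set (List A)) ∩ {([] : List A)}ᶜ) ∪ {r}) : Set (List A)) with hLp
  have hmem : ∀ w : List A, w ∈ Lp ↔ ((w ∈ L ∧ w ≠ []) ∨ w = r) := by
    intro w
    exact Iff.rfl
  refine ⟨Lp, ⟨⟨?_, ?_, ?_, ?_⟩, ?_⟩⟩
  · rw [hLp]
    exact (hL.regular.inter (RegularLang.singleton ([] : List A)).compl).union
      (RegularLang.singleton r)
  · -- not empty mem
    intro hmem0
    rcases (hmem []).mp hmem0 with ⟨_, hne⟩ | heq
    · exact hne rfl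
    · exact hrne heq.symm
  · -- plus prefix closed
    intro u v hu hv huv
    rcases (hmem (u ++ v)).mp huv with ⟨hin, _⟩ | heq
    · exact (hmem u).mpr (Or.inl ⟨hL.prefix_closed u v hin, hu⟩)
    · have hvlast : v.dropLast ++ [v.getLast hv] = v := List.dropLast_append_getLast hv
      have h1 : (u ++ v.dropLast) ++ [v.getLast hv] = u' ++ [b] := by
        rw [List.append_assoc, hvlast, heq, hr]
      have h2 : u ++ v.dropLast = u' := (List.append_inj' h1 rfl).1
      have huL : u ∈ L := hL.prefix_closed u v.dropLast (h2 ▸ hu'L)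
      exact (hmem u).mpr (Or.inl ⟨huL, hu⟩)
  · -- unique rep
    intro s
    by_cases hs : s = 1
    · subst hs
      refine ⟨r, ⟨(hmem r).mpr (Or.inr rfl), by rw [prodPlus_eq_some φ hrne, hrp]⟩, ?_⟩
      rintro x ⟨hx, hxp⟩
      obtain ⟨hxne, hxprod⟩ := of_prodPlus_eq_some φ hxp
      rcases (hmem x).mp hx with ⟨hxL, hne⟩ | heq
      · exact absurd (hw₀u x ⟨hxL, hxprod⟩) hne
      · exact heq
    · obtain ⟨w, ⟨hwL, hwp⟩, hwu⟩ := hL.unique_rep s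
      have hwne : w ≠ [] := by
        rintro rfl; exact hs (by rw [← hwp, monProd_nil])
      refine ⟨w, ⟨(hmem w).mpr (Or.inl ⟨hwL, hwne⟩),
        by rw [prodPlus_eq_some φ hwne, hwp]⟩, ?_⟩
      rintro x ⟨hx, hxp⟩
      obtain ⟨hxne, hxprod⟩ := of_prodPlus_eq_some φ hxp
      rcases (hmem x).mp hx with ⟨hxL, _⟩ | heq
      · exact hwu x ⟨hxL, hxprod⟩
      · exfalso; apply hs; rw [← hxprod, heq, hrp]
  · -- min length
    intro w hw v hvp
    rcases (hmem w).mp hw with ⟨hwL, hwne⟩ | heq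
    · rw [prodPlus_eq_some φ hwne] at hvp
      obtain ⟨hvne, hvprod⟩ := of_prodPlus_eq_some φ hvp
      exact hL.min_length w hwL v hvprod
    · subst heq
      rw [prodPlus_eq_some φ hrne, hrp] at hvp
      obtain ⟨hvne, hvprod⟩ := of_prodPlus_eq_some φ hvp
      exact le_trans hrlen (hmin v hvne hvprod)

end Directions


/-- A monoid is strongly Markov as a semigroup iff it is strongly Markov as a monoid. -/
theorem stmt5 {M : Type} [Monoid M] : SgStronglyMarkov M ↔ MonStronglyMarkov M := by
  exact ⟨sg_to_mon, mon_to_sg⟩
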